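/- Let (B,C) be a normal contact algebra and σ ⊆ B. Then σ is a cluster if and only if d(σ) = {b ∈ B | b* ∉ σ} is an end in (B,C). -/
import Mathlib


variable {B : Type*} [BooleanAlgebra B]

/-- A contact relation on a Boolean algebra: axioms (C1)-(C4). -/
def IsContactRel (C : B → B → Prop) : Prop :=
  (∀ a, a ≠ ⊥ → C a a) ∧
  (∀ a b, C a b → a ≠ ⊥ ∧ b ≠ ⊥) ∧
  (∀ a b, C a b → C b a) ∧
  (∀ a b c, C a (b ⊔ c) ↔ C a b ∨ C a c)

/-- A normal contact relation: additionally axioms (C5) and (C6). -/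
def IsNormalContactRel (C : B → B → Prop) : Prop :=
  IsContactRel C ∧
  (∀ a b, ¬ C a b → ∃ c, ¬ C a c ∧ ¬ C b cᶜ) ∧
  (∀ a, a ≠ ⊤ → ∃ b, b ≠ ⊥ ∧ ¬ C b a)

/-- A cluster in a contact algebra: axioms (K1)-(K3). -/
def IsCluster (C : B → B → Prop) (σ : Set B) : Prop :=
  σ.Nonempty ∧
  (∀ a ∈ σ, ∀ b ∈ σ, C a b) ∧
  (∀ a b, a ⊔ b ∈ σ → a ∈ σ ∨ b ∈ σ) ∧
  (∀ a, (∀ b ∈ σ, C a b) → a ∈ σ)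

/-- An ultrafilter in a Boolean algebra, as a set. -/
def IsUltrafilterSet (u : Set B) : Prop :=
  ⊤ ∈ u ∧ ⊥ ∉ u ∧
  (∀ a b, a ∈ u → a ≤ b → b ∈ u) ∧
  (∀ a b, a ∈ u → b ∈ u → a ⊓ b ∈ u) ∧
  (∀ a : B, a ∈ u ∨ aᶜ ∈ u)

/-- Non-tangential inclusion: a ≪ b iff ¬(a C bᶜ). -/
def Ntangle (C : B → B → Prop) (a b : B) : Prop := ¬ C a bᶜ

/-- An end in a normal contact algebra: axioms (E1), (E2). -/
def IsEnd (C : B → B → Prop) (ξ : Set B) : Prop :=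
  (∀ b ∈ ξ, ∀ c ∈ ξ, ∃ a ∈ ξ, a ≠ ⊥ ∧ Ntangle C a b ∧ Ntangle C a c) ∧
  (∀ a b : B, Ntangle C a b → aᶜ ∈ ξ ∨ b ∈ ξ)

/-- A filter in a Boolean algebra, as a set. -/
def IsFilterSet (v : Set B) : Prop :=
  v.Nonempty ∧ (∀ a b, a ∈ v → a ≤ b → b ∈ v) ∧ (∀ a b, a ∈ v → b ∈ v → a ⊓ b ∈ v)

/-- A round filter: a filter in which every element non-tangentially
contains some element. -/
def IsRoundFilter (C : B → B → Prop) (v : Set B) : Prop :=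
  IsFilterSet v ∧ ∀ b ∈ v, ∃ a ∈ v, Ntangle C a b

lemma contact_mono {C : B → B → Prop} (hC : IsContactRel C) {a b a' b' : B}
    (h : C a b) (ha : a ≤ a') (hb : b ≤ b') : C a' b' := by
  obtain ⟨c1, c2, c3, c4⟩ := hC
  have h1 : C a b' := by
    have := (c4 a b b').2 (Or.inl h)
    rwa [sup_eq_right.mpr hb] at this
  have h2 : C b' a' := by
    have := (c4 b' a a').2 (Or.inl (c3 _ _ h1))
    rwa [sup_eq_right.mpr ha] at this
  exact c3 _ _ h2

lemma le_of_ntangle {C : B → B → Prop} (hC : IsContactRel C) {a b : B}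
    (h : Ntangle C a b) : a ≤ b := by
  by_contra hle
  have hne : a ⊓ bᶜ ≠ ⊥ := by
    intro h0
    exact hle (by rwa [← sdiff_eq, sdiff_eq_bot_iff] at h0)
  exact h (contact_mono hC (hC.1 _ hne) inf_le_left inf_le_right)

lemma contact_top {C : B → B → Prop} (hC : IsContactRel C) {a : B}
    (ha : a ≠ ⊥) : C a ⊤ :=
  contact_mono hC (hC.1 a ha) le_rfl le_top

lemma end_not_compl_mem {C : B → B → Prop} (hC : IsContactRel C) {ξ : Set B}
    (hξ : IsEnd C ξ) {d : B} (h1 : d ∈ ξ) (h2 : dᶜ ∈ ξ) : False := by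
  obtain ⟨e, _, hne, h3, h4⟩ := hξ.1 d h1 dᶜ h2
  rw [Ntangle, compl_compl] at h4
  have htop : C e (d ⊔ dᶜ) := by
    rw [sup_compl_eq_top]; exact contact_top hC hne
  rcases (hC.2.2.2 e d dᶜ).1 htop with h | h
  · exact h4 h
  · exact h3 h

/-- σ is a cluster iff d(σ) = {b | bᶜ ∉ σ} is an end. -/
theorem cluster_iff_dual_end (C : B → B → Prop)
    (hC : IsNormalContactRel C) (σ : Set B) :
    IsCluster C σ ↔ IsEnd C {b : B | bᶜ ∉ σ} := by
  obtain ⟨hCc, hC5, hC6⟩ := hC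
  constructor
  · rintro ⟨-, hK2, hK3, hK4⟩
    have htop : ⊤ ∈ σ := by
      apply hK4
      intro b hb
      have hbb := hK2 b hb b hb
      have hbne := (hCc.2.1 b b hbb).1
      exact hCc.2.2.1 _ _ (contact_top hCc hbne)
    constructor
    · intro b hb c hc
      simp only [Set.mem_setOf_eq] at hb hc
      -- find x ∈ σ with ¬ C bᶜ x
      have hx : ∃ x ∈ σ, ¬ C bᶜ x := by
        by_contra h
        push_neg at h
        exact hb (hK4 _ h)
      have hy : ∃ y ∈ σ, ¬ C cᶜ y := by
        by_contra h
        push_neg at h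
        exact hc (hK4 _ h)
      obtain ⟨x, hxσ, hxb⟩ := hx
      obtain ⟨y, hyσ, hyc⟩ := hy
      obtain ⟨e, he1, he2⟩ := hC5 bᶜ x hxb
      obtain ⟨f, hf1, hf2⟩ := hC5 cᶜ y hyc
      refine ⟨e ⊓ f, ?_, ?_, ?_, ?_⟩
      · simp only [Set.mem_setOf_eq]
        intro hmem
        rw [compl_inf] at hmem
        rcases hK3 _ _ hmem with h | h
        · exact he2 (hK2 x hxσ eᶜ h)
        · exact hf2 (hK2 y hyσ fᶜ h)
      · intro h0
        have hts : eᶜ ⊔ fᶜ ∈ σ := by rw [← compl_inf, h0, compl_bot]; exact htop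
        rcases hK3 _ _ hts with h | h
        · exact he2 (hK2 x hxσ eᶜ h)
        · exact hf2 (hK2 y hyσ fᶜ h)
      · intro h
        exact he1 (hCc.2.2.1 _ _ (contact_mono hCc h inf_le_left le_rfl))
      · intro h
        exact hf1 (hCc.2.2.1 _ _ (contact_mono hCc h inf_le_right le_rfl))
    · intro a b hab
      simp only [Set.mem_setOf_eq, compl_compl]
      by_contra h
      push_neg at h
      exact hab (hK2 a h.1 bᶜ h.2)
  · intro hξ
    have hmemξ : ∀ x : B, x ∈ {b : B | bᶜ ∉ σ} ↔ xᶜ ∉ σ := fun x => Iff.rfl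
    have hK2 : ∀ a ∈ σ, ∀ b ∈ σ, C a b := by
      intro a ha b hb
      by_contra h
      have hnt : Ntangle C a bᶜ := by rw [Ntangle, compl_compl]; exact h
      rcases hξ.2 a bᶜ hnt with hm | hm <;>
        simp only [Set.mem_setOf_eq, compl_compl] at hm
      · exact hm ha
      · exact hm hb
    have hbotξ : (⊥ : B) ∉ {b : B | bᶜ ∉ σ} := by
      intro hb
      obtain ⟨a, _, hane, hant, -⟩ := hξ.1 ⊥ hb ⊥ hb
      rw [Ntangle, compl_bot] at hant
      exact hant (contact_top hCc hane)
    have htop : (⊤ : B) ∈ σ := by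
      by_contra h
      exact hbotξ (by simpa using h)
    have hK3 : ∀ a b : B, a ⊔ b ∈ σ → a ∈ σ ∨ b ∈ σ := by
      intro a b hab
      by_contra h
      push_neg at h
      have haξ : aᶜ ∈ {b : B | bᶜ ∉ σ} := by simpa using h.1
      have hbξ : bᶜ ∈ {b : B | bᶜ ∉ σ} := by simpa using h.2
      obtain ⟨d, hdξ, hdne, hda, hdb⟩ := hξ.1 aᶜ haξ bᶜ hbξ
      rw [Ntangle, compl_compl] at hda hdb
      have hdab : Ntangle C d (aᶜ ⊓ bᶜ) := by
        rw [Ntangle, compl_inf, compl_compl, compl_compl]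
        intro hcon
        rcases (hCc.2.2.2 d a b).1 hcon with hc | hc
        · exact hda hc
        · exact hdb hc
      rcases hξ.2 d (aᶜ ⊓ bᶜ) hdab with hm | hm
      · exact end_not_compl_mem hCc hξ hdξ hm
      · simp only [Set.mem_setOf_eq, compl_inf, compl_compl] at hm
        exact hm hab
    refine ⟨⟨⊤, htop⟩, hK2, hK3, ?_⟩
    intro a ha
    by_contra haσ
    have haξ : aᶜ ∈ {b : B | bᶜ ∉ σ} := by simpa using haσ
    obtain ⟨e, heξ, hene, hea, -⟩ := hξ.1 aᶜ haξ aᶜ haξ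
    rw [Ntangle, compl_compl] at hea
    obtain ⟨c, hec, hac⟩ := hC5 e a hea
    have hcσ : cᶜ ∈ σ := by
      by_contra hcc
      have hcξ : c ∈ {b : B | bᶜ ∉ σ} := hcc
      obtain ⟨f, _, hfne, hfe, hfc⟩ := hξ.1 e heξ c hcξ
      have hfle : f ≤ e := le_of_ntangle hCc hfe
      have hflc : f ≤ c := le_of_ntangle hCc hfc
      exact hec (contact_mono hCc (hCc.1 f hfne) hfle hflc)
    exact hac (ha cᶜ hcσ)
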